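/- Let f be a polynomial whose zeros all lie on a line L₁ in ℂ and whose 1-points all lie on a different line L₂ that intersects L₁. Then f has degree at most 2. -/

import Mathlib

/-- A line in `ℂ`: a set of the form `{p + t·d : t ∈ ℝ}` with `d ≠ 0`. -/
def IsLine (L : Set ℂ) : Prop :=
  ∃ p d : ℂ, d ≠ 0 ∧ L = {z : ℂ | ∃ t : ℝ, z = p + (t : ℂ) * d}

open Polynomial Complex

local notation "conj'" => starRingEnd ℂ

-- membership characterization of a line
lemma mem_line_iff (p d z : ℂ) (hd : d ≠ 0) :
    (∃ t : ℝ, z = p + (t : ℂ) * d) ↔ (conj' d * (z - p)).im = 0 := by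
  constructor
  · rintro ⟨t, rfl⟩
    have : conj' d * (p + (t:ℂ)*d - p) = (t:ℝ) * ((normSq d : ℝ) : ℂ) := by
      push_cast
      rw [mul_comm (starRingEnd ℂ d)]
      rw [show p + (t:ℂ)*d - p = (t:ℂ)*d by ring, mul_assoc, Complex.mul_conj]
    rw [this]
    simp [Complex.mul_im]
  · intro h
    set c := conj' d * (z - p) with hc
    have hcre : (c.re : ℂ) = c := by
      rw [Complex.ext_iff]; simp [h]
    refine ⟨c.re / normSq d, ?_⟩
    have hns : (normSq d : ℂ) ≠ 0 := by
      exact_mod_cast (Complex.normSq_pos.mpr hd).ne'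
    have hmc : (normSq d : ℂ) = d * conj' d := (Complex.mul_conj d).symm
    push_cast
    rw [div_mul_eq_mul_div, ← sub_eq_iff_eq_add', eq_comm, div_eq_iff hns, hmc, hcre, hc]
    ring

lemma ofReal_mul_im' (a : ℝ) (w : ℂ) : ((a:ℂ) * w).im = a * w.im := by
  simp [Complex.mul_im]

-- imaginary-part identity for the logarithmic derivative term
lemma im_term (p d z r : ℂ) (hr : (conj' d * (r - p)).im = 0) :
    (d * conj' (z - r)).im = -(conj' d * (z - p)).im := by
  have h1 : d * conj' (z - r) = conj' (conj' d * (z - r)) := by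
    simp [map_mul]
  rw [h1]
  have h2 : conj' d * (z - r) = conj' d * (z - p) - conj' d * (r - p) := by ring
  rw [Complex.conj_im, h2, Complex.sub_im, hr]
  ring

/-- Sign lemma for the logarithmic derivative of a product of linear factors
whose roots lie on the line through `p` with direction `d`. -/
lemma ld_sign (p d : ℂ) (z : ℂ) (hz : (conj' d * (z - p)).im ≠ 0) :
    ∀ l : List ℂ, (∀ r ∈ l, (conj' d * (r - p)).im = 0) →
      (l.map fun r => X - C r).prod.eval z ≠ 0 ∧
      (conj' d * (z - p)).im *
        (d * (derivative (l.map fun r => X - C r).prod).eval z *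
          conj' ((l.map fun r => X - C r).prod.eval z)).im ≤ 0 ∧
      (l ≠ [] →
        (conj' d * (z - p)).im *
          (d * (derivative (l.map fun r => X - C r).prod).eval z *
            conj' ((l.map fun r => X - C r).prod.eval z)).im < 0) := by
  intro l
  induction l with
  | nil =>
    intro _
    refine ⟨by simp, by simp, by simp⟩
  | cons r l' ih =>
    intro hl
    obtain ⟨hne, hweak, -⟩ := ih (fun r hr => hl r (List.mem_cons_of_mem _ hr))
    have hrL : (conj' d * (r - p)).im = 0 := hl r (List.mem_cons_self)
    set h : ℂ[X] := (l'.map fun r => X - C r).prod with hh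
    have hzr : z - r ≠ 0 := by
      intro h0
      apply hz
      rw [show z = r from sub_eq_zero.mp h0]
      exact hrL
    have hprod : ((r :: l').map fun r => X - C r).prod = (X - C r) * h := by
      simp [hh]
    rw [hprod]
    have heval : ((X - C r) * h).eval z = (z - r) * h.eval z := by simp
    have hg0 : ((X - C r) * h).eval z ≠ 0 := by
      rw [heval]; exact mul_ne_zero hzr hne
    have hA : d * (derivative ((X - C r) * h)).eval z * conj' (((X - C r) * h).eval z)
        = ((normSq (h.eval z) : ℝ) : ℂ) * (d * conj' (z - r))
          + ((normSq (z - r) : ℝ) : ℂ) * (d * (derivative h).eval z * conj' (h.eval z)) := by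
      rw [derivative_mul]
      simp only [derivative_sub, derivative_X, derivative_C, sub_zero, one_mul,
        eval_add, eval_mul, eval_sub, eval_X, eval_C, map_mul, map_sub, ← Complex.mul_conj]
      ring
    have him : (d * (derivative ((X - C r) * h)).eval z * conj' (((X - C r) * h).eval z)).im
        = normSq (h.eval z) * (-(conj' d * (z - p)).im)
          + normSq (z - r) * (d * (derivative h).eval z * conj' (h.eval z)).im := by
      rw [hA, Complex.add_im, ofReal_mul_im', ofReal_mul_im', im_term p d z r hrL]
    have h1 : 0 < normSq (h.eval z) := Complex.normSq_pos.mpr hne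
    have h2 : 0 < normSq (z - r) := Complex.normSq_pos.mpr hzr
    have hsq : 0 < (conj' d * (z - p)).im * (conj' d * (z - p)).im :=
      mul_self_pos.mpr hz
    refine ⟨hg0, ?_, ?_⟩
    · rw [him]; nlinarith
    · intro _; rw [him]; nlinarith

/-- Gauss–Lucas for a line: if all roots of `g` lie on the line through `p`
with direction `d`, so do the roots of `g'`. -/
lemma gauss_lucas_line (g : ℂ[X]) (hg : g ≠ 0) (hdeg : 0 < g.natDegree)
    (p d : ℂ) (hd : d ≠ 0)
    (hroots : ∀ z : ℂ, g.eval z = 0 → (conj' d * (z - p)).im = 0)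
    (z : ℂ) (hz : (derivative g).eval z = 0) : (conj' d * (z - p)).im = 0 := by
  by_contra hzL
  set l : List ℂ := g.roots.toList with hl
  have hcard : Multiset.card g.roots = g.natDegree :=
    (splits_iff_card_roots).mp (IsAlgClosed.splits g)
  have hlne : l ≠ [] := by
    intro h0
    have : g.roots = 0 := by
      rw [← Multiset.coe_toList g.roots, ← hl, h0]; rfl
    rw [this] at hcard
    simp at hcard
    omega
  have hfac : C g.leadingCoeff * (l.map fun r => X - C r).prod = g := by
    have := C_leadingCoeff_mul_prod_multiset_X_sub_C hcard
    rw [← Multiset.coe_toList g.roots, ← hl] at this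
    simpa using this
  have hmem : ∀ r ∈ l, (conj' d * (r - p)).im = 0 := by
    intro r hr
    apply hroots
    have : r ∈ g.roots := by
      rw [← Multiset.coe_toList g.roots, ← hl]; exact_mod_cast hr
    exact (mem_roots'.mp this).2
  obtain ⟨-, -, hstrict⟩ := ld_sign p d z hzL l hmem
  have hDz : (derivative (l.map fun r => X - C r).prod).eval z = 0 := by
    have hlc : g.leadingCoeff ≠ 0 := leadingCoeff_ne_zero.mpr hg
    have : (derivative g).eval z
        = g.leadingCoeff * (derivative (l.map fun r => X - C r).prod).eval z := by
      conv_lhs => rw [← hfac]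
      rw [derivative_C_mul, eval_mul, eval_C]
    rw [this] at hz
    exact (mul_eq_zero.mp hz).resolve_left hlc
  have := hstrict hlne
  rw [hDz] at this
  simp at this

/-- A line through two given distinct points is determined. -/
lemma line_eq_of_two_mem (L : Set ℂ) (hL : IsLine L) (z₁ z₂ : ℂ) (h12 : z₁ ≠ z₂)
    (h1 : z₁ ∈ L) (h2 : z₂ ∈ L) :
    L = {z : ℂ | ∃ s : ℝ, z = z₁ + (s : ℂ) * (z₂ - z₁)} := by
  obtain ⟨p, d, hd, rfl⟩ := hL
  obtain ⟨t₁, ht₁⟩ := h1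
  obtain ⟨t₂, ht₂⟩ := h2
  have htne : t₁ ≠ t₂ := by
    rintro rfl
    exact h12 (ht₁.trans ht₂.symm)
  have htne' : t₂ - t₁ ≠ 0 := sub_ne_zero.mpr (Ne.symm htne)
  ext z
  constructor
  · rintro ⟨t, rfl⟩
    refine ⟨(t - t₁) / (t₂ - t₁), ?_⟩
    have hc : ((t₂:ℂ) - (t₁:ℂ)) ≠ 0 := by
      exact_mod_cast htne'
    rw [ht₁, ht₂]
    push_cast
    field_simp
    ring
  · rintro ⟨s, rfl⟩
    refine ⟨t₁ + s * (t₂ - t₁), ?_⟩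
    rw [ht₁, ht₂]
    push_cast
    ring

/-- Three distinct points on a line cannot be equidistant (in `normSq`) from a point. -/
lemma not_three_on_line_circle (L : Set ℂ) (hL : IsLine L) (w : ℂ)
    (z₀ z₁ z₂ : ℂ) (h0 : z₀ ∈ L) (h1 : z₁ ∈ L) (h2 : z₂ ∈ L)
    (h01 : z₀ ≠ z₁) (h02 : z₀ ≠ z₂) (h12 : z₁ ≠ z₂)
    (e01 : normSq (z₀ - w) = normSq (z₁ - w))
    (e12 : normSq (z₁ - w) = normSq (z₂ - w)) : False := by
  obtain ⟨p, d, hd, rfl⟩ := hL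
  obtain ⟨t₀, rfl⟩ := h0
  obtain ⟨t₁, rfl⟩ := h1
  obtain ⟨t₂, rfl⟩ := h2
  have key : ∀ t : ℝ, normSq (p + (t:ℂ) * d - w)
      = normSq (p - w) + 2 * ((p - w) * conj' d).re * t + normSq d * t^2 := by
    intro t
    have hrw : p + (t:ℂ) * d - w = (p - w) + (t:ℂ) * d := by ring
    rw [hrw, Complex.normSq_add]
    rw [Complex.normSq_mul, Complex.normSq_ofReal]
    rw [map_mul, Complex.conj_ofReal, mul_left_comm]
    rw [show ((t:ℂ) * ((p - w) * conj' d)).re = t * ((p - w) * conj' d).re by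
      simp [Complex.mul_re]]
    ring
  rw [key t₀, key t₁] at e01
  rw [key t₁, key t₂] at e12
  set A := normSq d with hA
  set B := ((p - w) * conj' d).re with hB
  have hApos : 0 < A := Complex.normSq_pos.mpr hd
  have ht01 : t₀ ≠ t₁ := by rintro rfl; exact h01 rfl
  have ht02 : t₀ ≠ t₂ := by rintro rfl; exact h02 rfl
  have ht12 : t₁ ≠ t₂ := by rintro rfl; exact h12 rfl
  have k1 : (t₀ - t₁) * (2 * B + A * (t₀ + t₁)) = 0 := by linear_combination e01
  have k2 : (t₁ - t₂) * (2 * B + A * (t₁ + t₂)) = 0 := by linear_combination e12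
  have k1' : 2 * B + A * (t₀ + t₁) = 0 :=
    (mul_eq_zero.mp k1).resolve_left (sub_ne_zero.mpr ht01)
  have k2' : 2 * B + A * (t₁ + t₂) = 0 :=
    (mul_eq_zero.mp k2).resolve_left (sub_ne_zero.mpr ht12)
  have : A * (t₀ - t₂) = 0 := by linear_combination k1' - k2'
  rcases mul_eq_zero.mp this with h | h
  · exact hApos.ne' h
  · exact ht02 (sub_eq_zero.mp h)

/-- If `N ≥ 3`, the solutions of `α (z - w)^N = γ` (with `α, γ ≠ 0`) cannot all
lie on one line. -/
lemma not_roots_on_line (L : Set ℂ) (hL : IsLine L) (w α γ : ℂ) (hα : α ≠ 0)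
    (hγ : γ ≠ 0) (N : ℕ) (hN : 3 ≤ N)
    (h : ∀ z : ℂ, α * (z - w) ^ N = γ → z ∈ L) : False := by
  have hN0 : N ≠ 0 := by omega
  obtain ⟨r, hr⟩ := IsAlgClosed.exists_pow_nat_eq (γ / α) (Nat.pos_of_ne_zero hN0)
  have hr0 : r ≠ 0 := by
    rintro rfl
    rw [zero_pow hN0] at hr
    exact hγ (by field_simp at hr; linear_combination -hr)
  set ζ : ℂ := Complex.exp (2 * Real.pi * Complex.I / N) with hζdef
  have hζ : IsPrimitiveRoot ζ N := Complex.isPrimitiveRoot_exp N hN0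
  have habs : normSq ζ = 1 := by
    have : ‖ζ‖ = 1 := by
      rw [hζdef, Complex.norm_exp]
      norm_num [Complex.div_re, Complex.mul_re]
    rw [Complex.normSq_eq_norm_sq, this]; norm_num
  have hz : ∀ k : ℕ, α * ((w + ζ ^ k * r) - w) ^ N = γ := by
    intro k
    have : ((w + ζ ^ k * r) - w) ^ N = (ζ ^ N) ^ k * r ^ N := by
      rw [show (w + ζ ^ k * r) - w = ζ ^ k * r by ring, mul_pow, ← pow_mul, ← pow_mul,
        Nat.mul_comm]
    rw [this, hζ.pow_eq_one, one_pow, one_mul, hr]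
    field_simp
  have hmem : ∀ k : ℕ, w + ζ ^ k * r ∈ L := fun k => h _ (hz k)
  have hdist : ∀ i j : ℕ, i < N → j < N → i ≠ j → w + ζ ^ i * r ≠ w + ζ ^ j * r := by
    intro i j hi hj hij he
    have : ζ ^ i = ζ ^ j := by
      have := add_left_cancel he
      exact mul_right_cancel₀ hr0 this
    exact hij (hζ.pow_inj hi hj this)
  have hns : ∀ k : ℕ, normSq ((w + ζ ^ k * r) - w) = normSq r := by
    intro k
    rw [show (w + ζ ^ k * r) - w = ζ ^ k * r by ring, Complex.normSq_mul,
      map_pow, habs]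
    norm_num
  exact not_three_on_line_circle L hL w _ _ _ (hmem 0) (hmem 1) (hmem 2)
    (hdist 0 1 (by omega) (by omega) (by omega))
    (hdist 0 2 (by omega) (by omega) (by omega))
    (hdist 1 2 (by omega) (by omega) (by omega))
    ((hns 0).trans (hns 1).symm) ((hns 1).trans (hns 2).symm)

/-- a polynomial whose zeros lie on a line `L₁` and whose `1`-points
lie on a different line `L₂` intersecting `L₁` has degree at most `2`. -/
theorem polynomial_zeros_ones_on_intersecting_lines (f : Polynomial ℂ)
    (L₁ L₂ : Set ℂ) (hL₁ : IsLine L₁) (hL₂ : IsLine L₂)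
    (hne : L₁ ≠ L₂) (hint : (L₁ ∩ L₂).Nonempty)
    (hzeros : ∀ z : ℂ, f.eval z = 0 → z ∈ L₁)
    (hones : ∀ z : ℂ, f.eval z = 1 → z ∈ L₂) :
    f.degree ≤ 2 := by
  by_contra hdeg
  push_neg at hdeg
  have hf0 : f ≠ 0 := by
    intro h
    rw [h, degree_zero] at hdeg
    exact absurd hdeg (by simp)
  have hn3 : 3 ≤ f.natDegree := by
    have h1 : (2 : WithBot ℕ) < (f.natDegree : WithBot ℕ) :=
      lt_of_lt_of_le hdeg degree_le_natDegree
    have : (2 : ℕ) < f.natDegree := by exact_mod_cast h1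
    omega
  obtain ⟨p₁, d₁, hd₁, hL₁e⟩ := hL₁
  obtain ⟨p₂, d₂, hd₂, hL₂e⟩ := hL₂
  obtain ⟨w, hw₁, hw₂⟩ := hint
  have hdeg0 : 0 < f.natDegree := by omega
  -- Gauss–Lucas on f (zeros on L₁)
  have hzero' : ∀ z, f.eval z = 0 → (conj' d₁ * (z - p₁)).im = 0 := by
    intro z h
    have := hzeros z h
    rw [hL₁e] at this
    exact (mem_line_iff p₁ d₁ z hd₁).mp this
  have hGL₁ : ∀ z, (derivative f).eval z = 0 → z ∈ L₁ := by
    intro z h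
    rw [hL₁e]
    exact (mem_line_iff p₁ d₁ z hd₁).mpr
      (gauss_lucas_line f hf0 hdeg0 p₁ d₁ hd₁ hzero' z h)
  -- Gauss–Lucas on f - 1 (one-points on L₂)
  have hGL₂ : ∀ z, (derivative f).eval z = 0 → z ∈ L₂ := by
    intro z h
    have hgnd : (f - C 1).natDegree = f.natDegree := natDegree_sub_C
    have hg0 : f - C 1 ≠ 0 := by
      intro h0
      rw [h0, natDegree_zero] at hgnd
      omega
    have hone' : ∀ z, (f - C 1).eval z = 0 → (conj' d₂ * (z - p₂)).im = 0 := by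
      intro z h
      rw [eval_sub, eval_C, sub_eq_zero] at h
      have := hones z h
      rw [hL₂e] at this
      exact (mem_line_iff p₂ d₂ z hd₂).mp this
    have hder : derivative (f - C 1) = derivative f := by
      rw [derivative_sub, derivative_C, sub_zero]
    rw [hL₂e]
    refine (mem_line_iff p₂ d₂ z hd₂).mpr
      (gauss_lucas_line (f - C 1) hg0 (by omega) p₂ d₂ hd₂ hone' z ?_)
    rw [hder]
    exact h
  -- every critical point is w
  have hroot_w : ∀ z, (derivative f).eval z = 0 → z = w := by
    intro z hzz
    by_contra hzw
    apply hne
    rw [line_eq_of_two_mem L₁ ⟨p₁, d₁, hd₁, hL₁e⟩ z w hzw (hGL₁ z hzz) hw₁,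
      line_eq_of_two_mem L₂ ⟨p₂, d₂, hd₂, hL₂e⟩ z w hzw (hGL₂ z hzz) hw₂]
  -- structure of f'
  have hdf : (derivative f).degree = ((f.natDegree - 1 : ℕ) : WithBot ℕ) :=
    degree_derivative_eq f hdeg0
  have hdfne : derivative f ≠ 0 := by
    intro h
    rw [h, degree_zero] at hdf
    exact absurd hdf.symm (by simp)
  have hm : (derivative f).natDegree = f.natDegree - 1 :=
    natDegree_eq_of_degree_eq_some hdf
  set m : ℕ := (derivative f).natDegree with hmdef
  have hcard : Multiset.card (derivative f).roots = m :=
    splits_iff_card_roots.mp (IsAlgClosed.splits _)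
  have hrepl : (derivative f).roots = Multiset.replicate m w := by
    rw [Multiset.eq_replicate]
    exact ⟨hcard, fun b hb => hroot_w b (mem_roots'.mp hb).2⟩
  have hfac : derivative f = C (derivative f).leadingCoeff * (X - C w) ^ m := by
    conv_lhs => rw [← C_leadingCoeff_mul_prod_multiset_X_sub_C hcard]
    rw [hrepl, Multiset.map_replicate, Multiset.prod_replicate]
  set b : ℂ := (derivative f).leadingCoeff with hbdef
  have hb0 : b ≠ 0 := leadingCoeff_ne_zero.mpr hdfne
  have hmc : ((m : ℂ) + 1) ≠ 0 := Nat.cast_add_one_ne_zero m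
  set α : ℂ := b / ((m : ℂ) + 1) with hαdef
  have hα0 : α ≠ 0 := div_ne_zero hb0 hmc
  set F : ℂ[X] := C α * (X - C w) ^ (m + 1) with hFdef
  have hdF : derivative F = derivative f := by
    rw [hFdef, derivative_C_mul, derivative_X_sub_C_pow, hfac]
    rw [← mul_assoc, ← C_mul]
    congr 2
    rw [hαdef]
    push_cast
    field_simp
  have hconst : f - F = C ((f - F).coeff 0) :=
    eq_C_of_derivative_eq_zero (by rw [derivative_sub, hdF, sub_self])
  set β : ℂ := (f - F).coeff 0 with hβdef
  have hfform : f = C α * (X - C w) ^ (m + 1) + C β := by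
    rw [← hFdef]
    linear_combination (norm := ring_nf) hconst
  have heval : ∀ z : ℂ, f.eval z = α * (z - w) ^ (m + 1) + β := by
    intro z
    rw [hfform]
    simp
  have hN3 : 3 ≤ m + 1 := by omega
  rcases eq_or_ne β 0 with hβ | hβ
  · -- use one-points on L₂
    refine not_roots_on_line L₂ ⟨p₂, d₂, hd₂, hL₂e⟩ w α 1 hα0 one_ne_zero (m + 1) hN3 ?_
    intro z hz
    apply hones
    rw [heval, hz, hβ, add_zero]
  · -- use zeros on L₁
    refine not_roots_on_line L₁ ⟨p₁, d₁, hd₁, hL₁e⟩ w α (-β) hα0 (neg_ne_zero.mpr hβ)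
      (m + 1) hN3 ?_
    intro z hz
    apply hzeros
    rw [heval, hz]
    ring
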